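/- Let β : ℝⁿ×ℝⁿ → ℕ be admissible and tame, and let ū ∈ ℝⁿ be a cornerpoint at infinity of β, i.e. μ∞(ū) > 0. Then ū is a discontinuity point of β(·,v̂) for every v̂ with ū ≺ v̂. -/

import Mathlib

namespace PersistSpace

variable {n : ℕ}

/-- `u ≼ v` : componentwise ≤ -/
def vle (u v : Fin n → ℝ) : Prop := ∀ i, u i ≤ v i

/-- `u ≺ v` : componentwise < -/
def vlt (u v : Fin n → ℝ) : Prop := ∀ i, u i < v i

/-- `D_n⁺ = {(u,v) : u ≺ v}` -/
def Dplus (n : ℕ) : Set ((Fin n → ℝ) × (Fin n → ℝ)) := {p | vlt p.1 p.2}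

/-- Monotonicity: non-decreasing in `u`, non-increasing in `v`. -/
def Monot (β : (Fin n → ℝ) × (Fin n → ℝ) → ℕ) : Prop :=
  (∀ u u' v : Fin n → ℝ, vle u u' → vlt u' v → β (u, v) ≤ β (u', v)) ∧
  (∀ u v v' : Fin n → ℝ, vlt u v → vle v v' → β (u, v') ≤ β (u, v))

/-- Jump Monotonicity. -/
def JumpMonot (β : (Fin n → ℝ) × (Fin n → ℝ) → ℕ) : Prop :=
  ∀ u1 u2 v1 v2 : Fin n → ℝ, vle u1 u2 → vlt u2 v1 → vle v1 v2 →
    (β (u2, v2) : ℤ) - β (u1, v2) ≤ (β (u2, v1) : ℤ) - β (u1, v1)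

/-- Right-continuity in each variable separately. -/
def RightCont (β : (Fin n → ℝ) × (Fin n → ℝ) → ℕ) : Prop :=
  ∀ u v : Fin n → ℝ, vlt u v → ∃ δ > (0:ℝ),
    (∀ u' : Fin n → ℝ, vle u u' → ‖u' - u‖ < δ → β (u', v) = β (u, v)) ∧
    (∀ v' : Fin n → ℝ, vle v v' → ‖v' - v‖ < δ → β (u, v') = β (u, v))

def Admissible (β : (Fin n → ℝ) × (Fin n → ℝ) → ℕ) : Prop :=
  Monot β ∧ JumpMonot β ∧ RightCont β

/-- Tameness: boundedness at infinity and vanishing below. -/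
def Tame (β : (Fin n → ℝ) × (Fin n → ℝ) → ℕ) : Prop :=
  ∃ C > (0:ℝ),
    (∀ u v v' : Fin n → ℝ, vlt u v → vlt u v' → (∀ i, C ≤ v i) → (∀ i, C ≤ v' i) →
      β (u, v) = β (u, v')) ∧
    (∀ u v : Fin n → ℝ, vlt u v → (∀ i, u i ≤ -C) → β (u, v) = 0)

/-- `μ_e(u,v)` -/
def muE (β : (Fin n → ℝ) × (Fin n → ℝ) → ℕ) (e u v : Fin n → ℝ) : ℤ :=
  (β (u + e, v - e) : ℤ) - β (u - e, v - e) - β (u + e, v + e) + β (u - e, v + e)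

/-- Multiplicity `μ(u,v)`: infimum of `μ_e(u,v)` over admissible `e`. -/
noncomputable def mult (β : (Fin n → ℝ) × (Fin n → ℝ) → ℕ) (u v : Fin n → ℝ) : ℤ :=
  sInf {m : ℤ | ∃ e : Fin n → ℝ, vlt 0 e ∧ vlt (u + e) (v - e) ∧ m = muE β e u v}

/-- `μ∞_{e,v}(u)` -/
def muInfE (β : (Fin n → ℝ) × (Fin n → ℝ) → ℕ) (e v u : Fin n → ℝ) : ℤ :=
  (β (u + e, v) : ℤ) - β (u - e, v)

/-- Multiplicity at infinity `μ∞(u)`. -/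
noncomputable def multInf (β : (Fin n → ℝ) × (Fin n → ℝ) → ℕ) (u : Fin n → ℝ) : ℤ :=
  sInf {m : ℤ | ∃ e v : Fin n → ℝ, vlt 0 e ∧ vlt (u + e) v ∧ m = muInfE β e v u}

/-- `u` is a discontinuity point of `β(·,v)` (ℕ discrete). -/
def DiscontAt1 (β : (Fin n → ℝ) × (Fin n → ℝ) → ℕ) (v u : Fin n → ℝ) : Prop :=
  ¬ ContinuousWithinAt (fun u' => β (u', v)) {u' | vlt u' v} u

/-- `v` is a discontinuity point of `β(u,·)` (ℕ discrete). -/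
def DiscontAt2 (β : (Fin n → ℝ) × (Fin n → ℝ) → ℕ) (u v : Fin n → ℝ) : Prop :=
  ¬ ContinuousWithinAt (fun v' => β (u, v')) {v' | vlt u v'} v

/-- `p` is a discontinuity point of `β` restricted to `D_n⁺`. -/
def DiscontPt (β : (Fin n → ℝ) × (Fin n → ℝ) → ℕ) (p : (Fin n → ℝ) × (Fin n → ℝ)) : Prop :=
  ¬ ContinuousWithinAt β (Dplus n) p

/-- `β` and `γ` are `η`-interleaved. -/
def Interleaved (β γ : (Fin n → ℝ) × (Fin n → ℝ) → ℕ) (η : ℝ) : Prop :=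
  ∀ u v : Fin n → ℝ, vlt u v →
    β (u - (fun _ => η), v + (fun _ => η)) ≤ γ (u, v) ∧
    γ (u - (fun _ => η), v + (fun _ => η)) ≤ β (u, v)

/-- Proposition 3.14: discontinuities propagate from a cornerpoint at infinity. -/
theorem cornerpoint_at_infinity_gives_discontinuities
    (n : ℕ) (β : (Fin n → ℝ) × (Fin n → ℝ) → ℕ) (hβa : Admissible β) (hβt : Tame β)
    (ubar : Fin n → ℝ) (hcp : 0 < multInf β ubar) :
    ∀ vhat : Fin n → ℝ, vlt ubar vhat → DiscontAt1 β vhat ubar := by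
  intro vhat hlt hcont
  -- From continuity (ℕ discrete) get local constancy
  have hmem : ∀ᶠ u' in nhdsWithin ubar {u' | vlt u' vhat},
      β (u', vhat) = β (ubar, vhat) := by
    have := hcont ((isOpen_discrete {β (ubar, vhat)}).mem_nhds rfl)
    exact this
  rw [eventually_nhdsWithin_iff, Metric.eventually_nhds_iff] at hmem
  obtain ⟨ε, hε, hball⟩ := hmem
  -- choose e
  set e : Fin n → ℝ := fun i => min (ε / 2) ((vhat i - ubar i) / 2) with he
  have hepos : vlt 0 e := by
    intro i
    have h1 : (0:ℝ) < ε / 2 := by linarith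
    have h2 : (0:ℝ) < (vhat i - ubar i) / 2 := by have := hlt i; linarith
    simpa [he] using lt_min h1 h2
  have heub : ∀ i, e i ≤ ε / 2 := fun i => min_le_left _ _
  have hev : ∀ i, e i < vhat i - ubar i := by
    intro i
    have h2 : (vhat i - ubar i) / 2 < vhat i - ubar i := by have := hlt i; linarith
    exact lt_of_le_of_lt (min_le_right _ _) h2
  have hdist : ∀ s : Fin n → ℝ, (∀ i, |s i - ubar i| ≤ ε / 2) → dist s ubar < ε := by
    intro s hs
    have : dist s ubar ≤ ε / 2 := by
      rw [dist_pi_le_iff (by linarith)]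
      intro i
      simpa [Real.dist_eq] using hs i
    linarith
  have hp : β (ubar + e, vhat) = β (ubar, vhat) := by
    apply hball
    · apply hdist
      intro i
      have h1 := (hepos i)
      simp only [Pi.add_apply, add_sub_cancel_left]
      rw [abs_of_nonneg (le_of_lt (by simpa using h1))]
      exact heub i
    · intro i
      simp only [Pi.add_apply]
      have := hev i; linarith
  have hm : β (ubar - e, vhat) = β (ubar, vhat) := by
    apply hball
    · apply hdist
      intro i
      have h1 := (hepos i)
      simp only [Pi.sub_apply, sub_sub_cancel_left, abs_neg]
      rw [abs_of_nonneg (le_of_lt (by simpa using h1))]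
      exact heub i
    · intro i
      simp only [Pi.sub_apply]
      have h1 : (0:ℝ) < e i := by simpa using hepos i
      have := hlt i; linarith
  -- 0 is in the defining set of multInf
  have h0 : (0:ℤ) ∈ {m : ℤ | ∃ e v : Fin n → ℝ, vlt 0 e ∧ vlt (ubar + e) v ∧
      m = muInfE β e v ubar} := by
    refine ⟨e, vhat, hepos, ?_, ?_⟩
    · intro i
      simp only [Pi.add_apply]
      have := hev i; linarith
    · simp [muInfE, hp, hm]
  have : multInf β ubar ≤ 0 := by
    unfold multInf
    by_cases hb : BddBelow {m : ℤ | ∃ e v : Fin n → ℝ, vlt 0 e ∧ vlt (ubar + e) v ∧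
        m = muInfE β e v ubar}
    · exact csInf_le hb h0
    · rw [csInf_of_not_bddBelow hb, Int.csInf_empty]
  omega
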